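/- For λ > −1, t ∈ ℝ and integer m ≥ 2, the first moment of the generalised higher order Freud weight satisfies μ₀(t;λ,m) = ∫_{−∞}^{∞} |x|^{2λ+1} exp(t x² − x^{2m}) dx = (1/m) Σ_{n=0}^{∞} (tⁿ/n!) Γ((λ+n+1)/m), where the series converges absolutely for every t ∈ ℝ. -/

import Mathlib

open MeasureTheory Real

open Filter Set in
private lemma fms_aux1 (u : ℝ) (hu : 0 < u) (D q : ℕ) :
    Summable (fun k : ℕ => u ^ k * ((k + D).factorial : ℝ) / ((2 * k + q).factorial : ℝ)) := by
  apply summable_of_ratio_norm_eventually_le (r := 1/2) (by norm_num)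
  filter_upwards [eventually_ge_atTop ⌈u * (D + 2)⌉₊] with k hk
  have hk' : u * ((D:ℝ) + 2) ≤ (k : ℝ) := Nat.ceil_le.mp hk
  have e1 : k + 1 + D = (k + D) + 1 := by ring
  have e2 : 2 * (k + 1) + q = (2 * k + q + 1) + 1 := by ring
  rw [e1, e2]
  simp only [Nat.factorial_succ]
  have hF : (0:ℝ) < (k + D).factorial := by positivity
  have hG : (0:ℝ) < (2 * k + q).factorial := by positivity
  rw [Real.norm_eq_abs, Real.norm_eq_abs, abs_of_nonneg (by positivity),
    abs_of_nonneg (by positivity)]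
  push_cast
  rw [pow_succ]
  rw [mul_div_assoc', div_le_div_iff₀ (by positivity) (by positivity)]
  have key : u * ((k:ℝ) + (D:ℝ) + 1) ≤
      (1/2) * ((2*(k:ℝ) + (q:ℝ) + 1 + 1) * (2*(k:ℝ) + (q:ℝ) + 1)) := by
    have h1 : u * ((D:ℝ) + 2) * ((k:ℝ) + 1) ≤ (k:ℝ) * ((k:ℝ) + 1) :=
      by nlinarith [hk', Nat.cast_nonneg (α := ℝ) k]
    have h2 : (0:ℝ) ≤ u * ((D:ℝ) * k + k + 1) := by positivity
    nlinarith [mul_nonneg (Nat.cast_nonneg (α := ℝ) q) (Nat.cast_nonneg (α := ℝ) k),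
      mul_nonneg (Nat.cast_nonneg (α := ℝ) q) (Nat.cast_nonneg (α := ℝ) q),
      mul_nonneg (Nat.cast_nonneg (α := ℝ) k) (Nat.cast_nonneg (α := ℝ) k), Nat.cast_nonneg (α := ℝ) q, Nat.cast_nonneg (α := ℝ) k]
  have hP : (0:ℝ) ≤ u ^ k * (k + D).factorial * (2 * k + q).factorial := by positivity
  have := mul_le_mul_of_nonneg_right key hP
  nlinarith [this]

open Filter Set in
private lemma fms_aux2 (s : ℝ) (hs : 0 < s) (D : ℕ) :
    Summable (fun n : ℕ => s ^ n / (n.factorial : ℝ) * ((n / 2 + D).factorial : ℝ)) := by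
  apply Summable.even_add_odd
  · apply (fms_aux1 (s^2) (by positivity) D 0).congr
    intro k
    have h2 : 2 * k / 2 = k := by omega
    rw [h2]
    rw [show 2 * k + 0 = 2 * k from rfl, pow_mul]
    ring
  · apply ((fms_aux1 (s^2) (by positivity) D 1).mul_left s).congr
    intro k
    have h2 : (2 * k + 1) / 2 = k := by omega
    rw [h2, ← pow_mul, pow_succ]
    ring

set_option maxHeartbeats 1000000 in
open Filter Set in
private lemma fms_aux3 (c : ℝ) (hc : 0 < c) (m : ℕ) (hm : 2 ≤ m) (r : ℝ) (hr : 0 ≤ r) :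
    Summable (fun n : ℕ => r ^ n / (n.factorial : ℝ) * Real.Gamma ((c + n) / m)) := by
  have hm0 : (0:ℝ) < m := by positivity
  set s : ℝ := r + 1 with hs
  have hs0 : 0 < s := by positivity
  set D : ℕ := ⌈c⌉₊ + 2 with hD
  have hb : Summable (fun n : ℕ => s ^ n / (n.factorial : ℝ) * ((n / 2 + D).factorial : ℝ)) :=
    fms_aux2 s hs0 D
  rw [← summable_nat_add_iff (2 * m)]
  have key : ∀ n : ℕ, r ^ (n + 2*m) / ((n + 2*m).factorial : ℝ) *
      Real.Gamma ((c + (n + 2*m : ℕ)) / m) ≤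
      s ^ (n + 2*m) / ((n + 2*m).factorial : ℝ) * (((n + 2*m) / 2 + D).factorial : ℝ) := by
    intro n
    set N : ℕ := n + 2*m with hN
    have hcast : ((N:ℝ)) = n + 2*m := by push_cast [hN]; ring
    have h1 : (2:ℝ) ≤ (c + N) / m := by
      rw [le_div_iff₀ hm0]
      have : (2*m : ℝ) ≤ (N:ℝ) := by rw [hcast]; push_cast; linarith [Nat.cast_nonneg (α := ℝ) n]
      linarith
    have hNd : (N:ℝ) ≤ 2 * (N/2 : ℕ) + 1 := by
      have : N ≤ 2 * (N/2) + 1 := by omega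
      exact_mod_cast this
    have hcc : c ≤ (⌈c⌉₊ : ℝ) := Nat.le_ceil c
    have h2 : (c + N) / m ≤ ((N/2 + D : ℕ) : ℝ) + 1 := by
      have hle : (c + N) / m ≤ (c + N) / 2 := by
        apply div_le_div_of_nonneg_left (by linarith [Nat.cast_nonneg (α := ℝ) N]) two_pos
        exact_mod_cast hm
      have : (c + N) / 2 ≤ ((N/2 + D : ℕ) : ℝ) + 1 := by
        push_cast [hD]
        linarith
      linarith
    have hGm : Real.Gamma ((c + N) / m) ≤ ((N/2 + D).factorial : ℝ) := by
      have hmono := Real.Gamma_strictMonoOn_Ici.monotoneOn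
      have hmem1 : (c + N) / m ∈ Ici (2:ℝ) := h1
      have hmem2 : ((N/2 + D : ℕ) : ℝ) + 1 ∈ Ici (2:ℝ) := by
        simp only [mem_Ici]
        have : (1:ℝ) ≤ ((N/2 + D : ℕ) : ℝ) := by
          have : 1 ≤ N/2 + D := by omega
          exact_mod_cast this
        linarith
      have := hmono hmem1 hmem2 h2
      rwa [Real.Gamma_nat_eq_factorial] at this
    have hrs : r ^ N / ((N.factorial : ℝ)) ≤ s ^ N / ((N.factorial : ℝ)) := by
      gcongr
      linarith
    have hg0 : 0 < Real.Gamma ((c + N) / m) := Real.Gamma_pos_of_pos (by positivity)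
    exact mul_le_mul hrs hGm hg0.le (by positivity)
  apply Summable.of_nonneg_of_le ?_ key ((summable_nat_add_iff (2*m)).mpr hb)
  intro n
  have hg0 : 0 < Real.Gamma ((c + (n + 2*m : ℕ)) / m) := Real.Gamma_pos_of_pos (by positivity)
  positivity

open Filter Set in
set_option maxHeartbeats 1000000 in
/-- For `λ > −1`, `t ∈ ℝ` and integer `m ≥ 2`, the first moment of the
generalised higher order Freud weight `ω(x;t,λ) = |x|^{2λ+1} exp(t x² − x^{2m})` satisfies
`μ₀(t;λ,m) = (1/m) Σ_{n=0}^∞ (tⁿ/n!) Γ((λ+n+1)/m)`, the series converging absolutely for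
every `t`. -/
theorem first_moment_series (m : ℕ) (hm : 2 ≤ m) (lam t : ℝ) (hlam : -1 < lam) :
    Summable (fun n : ℕ =>
      |t ^ n / (Nat.factorial n : ℝ) * Real.Gamma ((lam + (n : ℝ) + 1) / (m : ℝ))|) ∧
    (∫ x : ℝ, |x| ^ (2 * lam + 1) * Real.exp (t * x ^ 2 - x ^ (2 * m))) =
      (1 / (m : ℝ)) *
        ∑' n : ℕ, t ^ n / (Nat.factorial n : ℝ) * Real.Gamma ((lam + (n : ℝ) + 1) / (m : ℝ)) := by
  have hm0 : (0:ℝ) < m := by positivity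
  have hm0' : (m:ℝ) ≠ 0 := hm0.ne'
  have hargpos : ∀ n : ℕ, (0:ℝ) < (lam + n + 1) / m := by
    intro n
    apply div_pos ?_ hm0
    have := Nat.cast_nonneg (α := ℝ) n
    linarith
  -- summability
  have hsum0 : Summable (fun n : ℕ => |t| ^ n / (n.factorial : ℝ) *
      Real.Gamma ((lam + 1 + n) / m)) := fms_aux3 (lam + 1) (by linarith) m hm |t| (abs_nonneg t)
  have hsum : Summable (fun n : ℕ =>
      |t ^ n / (Nat.factorial n : ℝ) * Real.Gamma ((lam + (n : ℝ) + 1) / (m : ℝ))|) := by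
    apply hsum0.congr
    intro n
    rw [show lam + 1 + (n:ℝ) = lam + n + 1 by ring, abs_mul, abs_div, abs_pow, Nat.abs_cast, abs_of_pos (Real.Gamma_pos_of_pos (hargpos n))]
  refine ⟨hsum, ?_⟩
  -- also the |t| version without abs bars, in convenient form
  have hsum1 : Summable (fun n : ℕ => |t| ^ n / (n.factorial : ℝ) *
      Real.Gamma ((lam + n + 1) / m)) := by
    apply hsum0.congr; intro n; rw [show lam + 1 + (n:ℝ) = lam + n + 1 by ring]
  set g : ℕ → ℝ → ℝ := fun n y =>
    t ^ n / (n.factorial : ℝ) * (y ^ (2 * lam + 1 + 2 * (n:ℝ)) * Real.exp (-y ^ (2 * (m:ℝ))))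
    with hg
  have hq : ∀ n : ℕ, (-1:ℝ) < 2 * lam + 1 + 2 * (n:ℝ) := by
    intro n; have := Nat.cast_nonneg (α := ℝ) n; linarith
  have hm2 : (2:ℝ) ≤ (m:ℝ) := by exact_mod_cast hm
  have hp1 : (1:ℝ) ≤ 2 * (m:ℝ) := by linarith
  have hbase_int : ∀ n : ℕ, IntegrableOn
      (fun y : ℝ => y ^ (2 * lam + 1 + 2 * (n:ℝ)) * Real.exp (-y ^ (2 * (m:ℝ)))) (Ioi 0) :=
    fun n => integrableOn_rpow_mul_exp_neg_rpow (hq n) (by linarith)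
  have hint : ∀ n : ℕ, IntegrableOn (g n) (Ioi 0) := fun n => (hbase_int n).const_mul _
  have hGamval : ∀ n : ℕ,
      (∫ y in Ioi (0:ℝ), y ^ (2 * lam + 1 + 2 * (n:ℝ)) * Real.exp (-y ^ (2 * (m:ℝ)))) =
      1 / (2 * (m:ℝ)) * Real.Gamma ((lam + n + 1) / m) := by
    intro n
    rw [integral_rpow_mul_exp_neg_rpow (by positivity) (hq n)]
    congr 1
    rw [show 2 * lam + 1 + 2 * (n:ℝ) + 1 = 2 * (lam + n + 1) by ring,
      mul_div_mul_left _ _ (two_ne_zero)]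
  -- value of each integral
  have hval : ∀ n : ℕ, (∫ y in Ioi (0:ℝ), g n y) =
      t ^ n / (n.factorial : ℝ) * (1 / (2 * (m:ℝ)) * Real.Gamma ((lam + n + 1) / m)) := by
    intro n
    rw [hg]
    simp only []
    rw [integral_const_mul, hGamval n]
  -- step 1 : reduce to Ioi 0
  have step1 : (∫ x : ℝ, |x| ^ (2 * lam + 1) * Real.exp (t * x ^ 2 - x ^ (2 * m)))
      = 2 * ∫ y in Ioi (0:ℝ), y ^ (2 * lam + 1) * Real.exp (t * y ^ 2 - y ^ (2 * m)) := by
    rw [show (fun x : ℝ => |x| ^ (2 * lam + 1) * Real.exp (t * x ^ 2 - x ^ (2 * m)))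
        = fun x : ℝ =>
          (fun y : ℝ => y ^ (2 * lam + 1) * Real.exp (t * y ^ 2 - y ^ (2 * m))) |x| from
      funext fun x => by simp only [sq_abs, (even_two_mul m).pow_abs]]
    exact integral_comp_abs (f := fun y : ℝ => y ^ (2 * lam + 1) * Real.exp (t * y ^ 2 - y ^ (2 * m)))
  -- step 2 : expand the integrand into a series on Ioi 0
  have step2 : ∀ y ∈ Ioi (0:ℝ),
      y ^ (2 * lam + 1) * Real.exp (t * y ^ 2 - y ^ (2 * m)) = ∑' n : ℕ, g n y := by
    intro y hy
    have hy0 : (0:ℝ) < y := hy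
    have hexp : Real.exp (t * y ^ 2) = ∑' n : ℕ, (t * y ^ 2) ^ n / (n.factorial : ℝ) := by
      rw [Real.exp_eq_exp_ℝ, NormedSpace.exp_eq_tsum_div]
    have hsplit : Real.exp (t * y ^ 2 - y ^ (2 * m))
        = Real.exp (t * y ^ 2) * Real.exp (-(y ^ (2 * m))) := by
      rw [← Real.exp_add]; ring_nf
    have h3 : y ^ (2 * (m:ℝ)) = y ^ (2 * m) := by
      rw [← Real.rpow_natCast y (2 * m)]; norm_cast
    calc y ^ (2 * lam + 1) * Real.exp (t * y ^ 2 - y ^ (2 * m))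
        = (∑' n : ℕ, (t * y ^ 2) ^ n / (n.factorial : ℝ)) *
            (y ^ (2 * lam + 1) * Real.exp (-(y ^ (2 * m)))) := by
          rw [hsplit, ← hexp]; ring
      _ = ∑' n : ℕ, (t * y ^ 2) ^ n / (n.factorial : ℝ) *
            (y ^ (2 * lam + 1) * Real.exp (-(y ^ (2 * m)))) := by
          rw [← tsum_mul_right]
      _ = ∑' n : ℕ, g n y := by
          apply tsum_congr; intro n
          rw [hg]; simp only []
          have h1 : (t * y ^ 2) ^ n = t ^ n * y ^ (2 * n) := by
            rw [mul_pow, ← pow_mul]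
          have h2 : y ^ (2 * lam + 1 + 2 * (n:ℝ)) = y ^ (2 * lam + 1) * y ^ (2 * n) := by
            rw [← Real.rpow_natCast y (2 * n), ← Real.rpow_add hy0]
            norm_cast
          rw [h1, h2, h3]; ring
  -- step 3 : the lintegral bound
  have hnorm : ∀ n : ℕ, ∀ y ∈ Ioi (0:ℝ), ‖g n y‖ =
      |t| ^ n / (n.factorial : ℝ) *
        (y ^ (2 * lam + 1 + 2 * (n:ℝ)) * Real.exp (-y ^ (2 * (m:ℝ)))) := by
    intro n y hy
    have hy0 : (0:ℝ) < y := hy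
    rw [hg]; simp only [Real.norm_eq_abs, abs_mul, abs_div, abs_pow, Nat.abs_cast,
      abs_of_pos (Real.rpow_pos_of_pos hy0 _), abs_of_pos (Real.exp_pos _)]
  have hsum2 : Summable (fun n : ℕ => |t| ^ n / (n.factorial : ℝ) *
      (1 / (2 * (m:ℝ)) * Real.Gamma ((lam + n + 1) / m))) := by
    apply (hsum1.mul_left (1 / (2 * (m:ℝ)))).congr
    intro n; ring
  have hlin : (∑' n : ℕ, ∫⁻ y in Ioi (0:ℝ), ‖g n y‖₊) ≠ ⊤ := by
    have heq : ∀ n : ℕ, (∫⁻ y in Ioi (0:ℝ), ‖g n y‖₊) =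
        ENNReal.ofReal (|t| ^ n / (n.factorial : ℝ) *
          (1 / (2 * (m:ℝ)) * Real.Gamma ((lam + n + 1) / m))) := by
      intro n
      rw [show (∫⁻ y in Ioi (0:ℝ), (‖g n y‖₊ : ENNReal)) = ∫⁻ y in Ioi (0:ℝ), ‖g n y‖ₑ from rfl,
        ← ofReal_integral_norm_eq_lintegral_enorm (hint n)]
      congr 1
      rw [setIntegral_congr_fun measurableSet_Ioi (hnorm n), integral_const_mul, hGamval n]
    calc (∑' n : ℕ, ∫⁻ y in Ioi (0:ℝ), ‖g n y‖₊)
        = ∑' n : ℕ, ENNReal.ofReal (|t| ^ n / (n.factorial : ℝ) *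
            (1 / (2 * (m:ℝ)) * Real.Gamma ((lam + n + 1) / m))) := tsum_congr heq
      _ = ENNReal.ofReal (∑' n : ℕ, |t| ^ n / (n.factorial : ℝ) *
            (1 / (2 * (m:ℝ)) * Real.Gamma ((lam + n + 1) / m))) := by
          refine (ENNReal.ofReal_tsum_of_nonneg (fun n => ?_) hsum2).symm
          have hG := (Real.Gamma_pos_of_pos (hargpos n)).le
          positivity
      _ ≠ ⊤ := ENNReal.ofReal_ne_top
  have hmeas : ∀ n : ℕ, AEStronglyMeasurable (g n) (volume.restrict (Ioi (0:ℝ))) :=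
    fun n => (hint n).1
  rw [step1, setIntegral_congr_fun measurableSet_Ioi step2, integral_tsum hmeas hlin,
    tsum_congr hval,
    tsum_congr (fun n : ℕ => show t ^ n / (n.factorial : ℝ) *
        (1 / (2 * (m:ℝ)) * Real.Gamma ((lam + n + 1) / m))
      = 1 / (2 * (m:ℝ)) * (t ^ n / (n.factorial : ℝ) * Real.Gamma ((lam + n + 1) / m)) by ring),
    tsum_mul_left, ← mul_assoc]
  congr 1
  field_simp
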